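/- Let C be an additive category, F a class of morphisms satisfying condition (M0) (contains all isomorphisms, closed under composition and finite direct sums), N_F the associated subcategory, p : C → C/[N_F] the ideal quotient, and suppose f, g : A → B satisfy p(f) = p(g). Then f ∈ F if and only if g ∈ F. -/
import Mathlib


open CategoryTheory CategoryTheory.Limits ZeroObject

universe v u

variable {C : Type u} [Category.{v} C] [Preadditive C] [HasZeroObject C]
  [HasFiniteBiproducts C] [HasBinaryBiproducts C]

/-- A morphism factors through an object of the class `N`. -/
def FactorsThrough (N : Set C) {X Y : C} (f : X ⟶ Y) : Prop :=
  ∃ Z ∈ N, ∃ (u : X ⟶ Z) (v : Z ⟶ Y), f = u ≫ v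

/-- The hom relation identifying two morphisms whose difference lies in the
ideal `[N]` of morphisms factoring through an object of `N`. -/
def idealRel (N : Set C) : HomRel C := fun _ _ f g => FactorsThrough N (f - g)

/-- The full subcategory `N_F` of objects `N` such that both `N ⟶ 0` and
`0 ⟶ N` belong to `F`. -/
def NF (F : MorphismProperty C) : Set C :=
  {N : C | F (0 : N ⟶ (0 : C)) ∧ F (0 : (0 : C) ⟶ N)}

/-- Condition (M0): `F` contains all isomorphisms, is closed under composition
and closed under finite direct sums of morphisms. -/
def M0 (F : MorphismProperty C) : Prop :=
  (∀ {X Y : C} (f : X ⟶ Y), IsIso f → F f) ∧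
  (∀ {X Y Z : C} (f : X ⟶ Y) (g : Y ⟶ Z), F f → F g → F (f ≫ g)) ∧
  (∀ {X₁ Y₁ X₂ Y₂ : C} (f₁ : X₁ ⟶ Y₁) (f₂ : X₂ ⟶ Y₂), F f₁ → F f₂ →
    F (biprod.map f₁ f₂))

/-- The class `F̄` of morphisms of the ideal quotient `C/[N_F]` obtained from
the image of `F` by closing under pre- and post-composition with isomorphisms. -/
def Fbar (F : MorphismProperty C) :
    MorphismProperty (CategoryTheory.Quotient (idealRel (NF F))) :=
  fun X Y h => ∃ (A B : C)
    (e₁ : X ⟶ (CategoryTheory.Quotient.functor (idealRel (NF F))).obj A)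
    (e₂ : (CategoryTheory.Quotient.functor (idealRel (NF F))).obj B ⟶ Y)
    (f : A ⟶ B), IsIso e₁ ∧ IsIso e₂ ∧ F f ∧
      h = e₁ ≫ (CategoryTheory.Quotient.functor (idealRel (NF F))).map f ≫ e₂

/-- 2-out-of-3 property for a class of morphisms. -/
def TwoOutOfThree {D : Type*} [Category D] (S : MorphismProperty D) : Prop :=
  (∀ {X Y Z : D} (f : X ⟶ Y) (g : Y ⟶ Z), S f → S g → S (f ≫ g)) ∧
  (∀ {X Y Z : D} (f : X ⟶ Y) (g : Y ⟶ Z), S f → S (f ≫ g) → S g) ∧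
  (∀ {X Y Z : D} (f : X ⟶ Y) (g : Y ⟶ Z), S g → S (f ≫ g) → S f)


/-- Auxiliary: if `f - g` factors through an object of `N_F` and `f ∈ F`,
then `g ∈ F`. -/
theorem mem_F_of_sub_factors (F : MorphismProperty C) (hM0 : M0 F)
    {A B Z : C} (hZ : Z ∈ NF F) (f g : A ⟶ B) (u : A ⟶ Z) (v : Z ⟶ B)
    (huv : f - g = u ≫ v) (hf : F f) : F g := by
  obtain ⟨hiso, hcomp, hsum⟩ := hM0
  obtain ⟨hZ0, h0Z⟩ := hZ
  have hφ : IsIso ((𝟙 (A ⊞ Z)) + biprod.fst ≫ u ≫ biprod.inr) := by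
    refine ⟨(𝟙 (A ⊞ Z)) - biprod.fst ≫ u ≫ biprod.inr, ?_, ?_⟩ <;>
      simp [Preadditive.comp_sub, Preadditive.sub_comp, Preadditive.comp_add,
        Preadditive.add_comp]
  have hσ : IsIso ((𝟙 (B ⊞ Z)) - biprod.snd ≫ v ≫ biprod.inl) := by
    refine ⟨(𝟙 (B ⊞ Z)) + biprod.snd ≫ v ≫ biprod.inl, ?_, ?_⟩ <;>
      simp [Preadditive.comp_sub, Preadditive.sub_comp, Preadditive.comp_add,
        Preadditive.add_comp]
  have he₁ : IsIso (biprod.lift (𝟙 A) (0 : A ⟶ (0 : C))) := by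
    refine ⟨biprod.fst, by simp, ?_⟩
    ext <;> simp
  have he₂ : IsIso (biprod.fst : B ⊞ (0 : C) ⟶ B) := by
    refine ⟨biprod.inl, ?_, by simp⟩
    ext <;> simp
  have key : g = biprod.lift (𝟙 A) (0 : A ⟶ (0 : C)) ≫
      biprod.map (𝟙 A) (0 : (0 : C) ⟶ Z) ≫
      ((𝟙 (A ⊞ Z)) + biprod.fst ≫ u ≫ biprod.inr) ≫
      biprod.map f (𝟙 Z) ≫
      ((𝟙 (B ⊞ Z)) - biprod.snd ≫ v ≫ biprod.inl) ≫
      biprod.map (𝟙 B) (0 : Z ⟶ (0 : C)) ≫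
      (biprod.fst : B ⊞ (0 : C) ⟶ B) := by
    have : g = f - u ≫ v := by rw [← huv]; abel
    rw [this]
    simp [Preadditive.comp_sub, Preadditive.sub_comp, Preadditive.comp_add,
      Preadditive.add_comp]
  rw [key]
  exact hcomp _ _ (hiso _ he₁) (hcomp _ _ (hsum _ _ (hiso _ inferInstance) h0Z)
    (hcomp _ _ (hiso _ hφ) (hcomp _ _ (hsum _ _ hf (hiso _ inferInstance))
      (hcomp _ _ (hiso _ hσ) (hcomp _ _ (hsum _ _ (hiso _ inferInstance) hZ0)
        (hiso _ he₂))))))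

/-- Let `F` satisfy condition (M0).  If two morphisms `f, g : A ⟶ B` have the
same image under the ideal quotient functor `p : C ⟶ C/[N_F]` (i.e. `f - g`
factors through an object of `N_F`), then `f ∈ F` if and only if `g ∈ F`. -/
theorem mem_F_iff_of_idealRel (F : MorphismProperty C) (hM0 : M0 F)
    {A B : C} (f g : A ⟶ B) (h : idealRel (NF F) f g) :
    F f ↔ F g := by
  obtain ⟨Z, hZ, u, v, huv⟩ := h
  constructor
  · exact fun hf => mem_F_of_sub_factors F hM0 hZ f g u v huv hf
  · refine fun hg => mem_F_of_sub_factors F hM0 hZ g f (-u) v ?_ hg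
    rw [Preadditive.neg_comp, ← huv]; abel
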